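/- Let H be an additive subgroup of ℝⁿ. Then there exists u ∈ ℝⁿ such that the closure of the additive subgroup generated by H ∪ {u} equals span_ℝ(H) as a set; that is, H + ℤu is dense in the linear span of H. -/

import Mathlib

open Set Metric

/-- Theorem 1.6: for any additive subgroup `H` of `ℝⁿ` there is a vector `u`
such that `H + ℤu` is dense in the linear span of `H`. -/
theorem exists_add_zmultiples_dense_in_span (n : ℕ) (H : AddSubgroup (Fin n → ℝ)) :
    ∃ u : Fin n → ℝ,
      closure ((H ⊔ AddSubgroup.zmultiples u : AddSubgroup (Fin n → ℝ)) : Set (Fin n → ℝ)) =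
        (Submodule.span ℝ (H : Set (Fin n → ℝ)) : Set (Fin n → ℝ)) := by
  classical
  set E := (Fin n → ℝ) with hE
  obtain ⟨s, hsH, hspan, hli⟩ := exists_linearIndependent ℝ (H : Set E)
  haveI : Fintype s := hli.setFinite.fintype
  set V : Submodule ℝ E := Submodule.span ℝ (H : Set E) with hV
  have hrange : Set.range ((↑) : s → E) = s := Subtype.range_coe
  have hV' : Submodule.span ℝ (Set.range ((↑) : s → E)) = V := by
    rw [hrange, hspan]
  set T : (s → ℝ) →ₗ[ℝ] E := Fintype.linearCombination ℝ ((↑) : s → E) with hTdef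
  have hT : ∀ c : s → ℝ, T c = ∑ i : s, c i • (i : E) := fun c => rfl
  have hTcont : Continuous T := T.continuous_of_finiteDimensional
  have hTV : ∀ c, T c ∈ V := by
    intro c
    rw [hT]
    exact Submodule.sum_mem _ fun i _ =>
      Submodule.smul_mem _ _ (Submodule.subset_span (hsH i.2))
  -- Lattice approximation: every point of `V` is an element of `H` plus a small combination
  have key : ∀ x : E, x ∈ V → ∃ h ∈ H, ∃ f : s → ℝ, (∀ i, ‖f i‖ ≤ 1) ∧ h + T f = x := by
    intro x hx
    have hx' : x ∈ Submodule.span ℝ (Set.range ((↑) : s → E)) := hV' ▸ hx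
    set cx : s → ℝ := fun i => (Module.Basis.span hli).repr ⟨x, hx'⟩ i with hcx
    have hxsum : ∑ i : s, cx i • (i : E) = x := by
      have := congrArg (Subtype.val) ((Module.Basis.span hli).sum_repr ⟨x, hx'⟩)
      simpa [Module.Basis.span_apply] using this
    refine ⟨∑ i : s, (⌊cx i⌋ : ℝ) • (i : E), ?_, fun i => Int.fract (cx i), ?_, ?_⟩
    · refine AddSubgroup.sum_mem _ fun i _ => ?_
      rw [Int.cast_smul_eq_zsmul]
      exact AddSubgroup.zsmul_mem _ (hsH i.2) _
    · intro i
      rw [Real.norm_eq_abs, abs_of_nonneg (Int.fract_nonneg _)]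
      exact (Int.fract_lt_one _).le
    · rw [hT, ← Finset.sum_add_distrib, ← hxsum]
      refine Finset.sum_congr rfl fun i _ => ?_
      rw [← add_smul, Int.floor_add_fract]
  -- countable dense subset of V
  obtain ⟨Q, hQc, hQd⟩ := TopologicalSpace.exists_countable_dense ↥(V : Set E)
  haveI := hQc.to_subtype
  -- Baire category argument
  set W : ↥Q × ℚ → Set (s → ℝ) := fun p =>
    {c | (p.2 : ℝ) ≤ 0 ∨
      ∃ h ∈ H, ∃ m : ℤ, ‖h + m • T c - ((p.1 : ↥(V : Set E)) : E)‖ < (p.2 : ℝ)} with hW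
  have hWopen : ∀ p, IsOpen (W p) := by
    rintro ⟨q, r⟩
    by_cases hr : (r : ℝ) ≤ 0
    · have : W (q, r) = univ := eq_univ_of_forall fun c => Or.inl hr
      rw [this]; exact isOpen_univ
    · have : W (q, r) = ⋃ h ∈ (H : Set E), ⋃ m : ℤ,
          {c | ‖h + m • T c - ((q : ↥(V : Set E)) : E)‖ < (r : ℝ)} := by
        ext c
        simp only [hW, mem_setOf_eq, mem_iUnion, exists_prop]
        constructor
        · rintro (h0 | ⟨h, hh, m, hm⟩)
          · exact absurd h0 hr
          · exact ⟨h, hh, m, hm⟩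
        · rintro ⟨h, hh, m, hm⟩
          exact Or.inr ⟨h, hh, m, hm⟩
      rw [this]
      refine isOpen_biUnion fun h _ => isOpen_iUnion fun m => ?_
      exact isOpen_lt
        (((continuous_const.add ((continuous_zsmul m).comp hTcont)).sub
          continuous_const).norm) continuous_const
  have hWdense : ∀ p, Dense (W p) := by
    rintro ⟨⟨q, hqQ⟩, r⟩
    by_cases hr : (r : ℝ) ≤ 0
    · have : W (⟨q, hqQ⟩, r) = univ := eq_univ_of_forall fun c => Or.inl hr
      rw [this]; exact dense_univ
    · push_neg at hr
      rw [Metric.dense_iff]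
      intro c₀ δ hδ
      obtain ⟨m, hm⟩ := exists_nat_gt (max (1 / δ) 0)
      have hm0 : (0 : ℝ) < m := lt_of_le_of_lt (le_max_right _ _) hm
      have hmδ : (1 : ℝ) / m < δ := by
        rw [div_lt_iff₀ hm0]
        have h1δ : 1 / δ < m := lt_of_le_of_lt (le_max_left _ _) hm
        have h2 := mul_lt_mul_of_pos_left h1δ hδ
        rwa [mul_one_div, div_self hδ.ne'] at h2
      set x : E := (q : E) - (m : ℝ) • T c₀ with hx
      have hxV : x ∈ V := Submodule.sub_mem _ q.2 (Submodule.smul_mem _ _ (hTV c₀))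
      obtain ⟨h, hh, f, hf1, hfx⟩ := key x hxV
      have hTf : T f = x - h := eq_sub_of_add_eq' hfx
      set c : s → ℝ := c₀ + (m : ℝ)⁻¹ • f with hc
      have hzeq : h + ((m : ℕ) : ℤ) • T c - (q : E) = 0 := by
        have hz : ((m : ℕ) : ℤ) • T c = (m : ℝ) • T c := by
          rw [← Int.cast_smul_eq_zsmul ℝ]
          norm_num
        rw [hz, hc, map_add, map_smul, smul_add, smul_smul,
          mul_inv_cancel₀ hm0.ne', one_smul, hTf, hx]
        abel
      refine ⟨c, mem_inter ?_ (Or.inr ⟨h, hh, (m : ℤ), by rw [hzeq, norm_zero]; exact hr⟩)⟩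
      rw [mem_ball, hc, dist_eq_norm, add_sub_cancel_left, norm_smul]
      have hfnorm : ‖f‖ ≤ 1 := pi_norm_le_iff_of_nonneg zero_le_one |>.2 hf1
      calc ‖(m : ℝ)⁻¹‖ * ‖f‖ ≤ ‖(m : ℝ)⁻¹‖ * 1 :=
            mul_le_mul_of_nonneg_left hfnorm (norm_nonneg _)
        _ = (1 : ℝ) / m := by
            rw [mul_one, Real.norm_eq_abs, abs_of_nonneg (by positivity), one_div]
        _ < δ := hmδ
  obtain ⟨c₀, hc₀⟩ := (dense_iInter_of_isOpen hWopen hWdense).nonempty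
  refine ⟨T c₀, ?_⟩
  apply Set.Subset.antisymm
  · refine closure_minimal ?_ V.closed_of_finiteDimensional
    intro y hy
    have hle : H ⊔ AddSubgroup.zmultiples (T c₀) ≤ V.toAddSubgroup :=
      sup_le (fun z hz => Submodule.subset_span hz)
        (AddSubgroup.zmultiples_le.mpr (hTV c₀))
    exact hle hy
  · intro v hv
    rw [Metric.mem_closure_iff]
    intro ε hε
    obtain ⟨q, hqQ, hq⟩ := hQd.exists_dist_lt ⟨v, hv⟩ (half_pos hε)
    obtain ⟨r, hr0, hrε⟩ := exists_rat_btwn (half_pos hε)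
    have hcW := mem_iInter.1 hc₀ (⟨q, hqQ⟩, r)
    rcases hcW with h0 | ⟨h, hh, m, hnorm⟩
    · exact absurd h0 (not_le.2 hr0)
    · refine ⟨h + m • T c₀, ?_, ?_⟩
      · exact AddSubgroup.add_mem _
          ((le_sup_left : H ≤ H ⊔ AddSubgroup.zmultiples (T c₀)) hh)
          ((le_sup_right : AddSubgroup.zmultiples (T c₀) ≤ _)
            (AddSubgroup.zsmul_mem_zmultiples _ m))
      · have d1 : dist v (q : E) < ε / 2 := by rwa [Subtype.dist_eq] at hq
        have d2 : dist (q : E) (h + m • T c₀) < ε / 2 := by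
          rw [dist_eq_norm, norm_sub_rev]
          exact lt_trans hnorm hrε
        calc dist v (h + m • T c₀) ≤ dist v (q : E) + dist (q : E) (h + m • T c₀) :=
              dist_triangle _ _ _
          _ < ε / 2 + ε / 2 := add_lt_add d1 d2
          _ = ε := add_halves ε
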